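/- Let x, y, z ∈ ℝ satisfy 0 ≤ x + y + z ≤ 3 and (x² + y² + z²) − 2(xy + xz + yz) + 2(x + y + z) ≤ 3. Then there exists a density matrix ρ on (ℂ²)^⊗3 with real entries and ρᵀ = ρ such that tr(ρ SWAP₁₂) = x, tr(ρ SWAP₁₃) = y, tr(ρ SWAP₂₃) = z. -/

import Mathlib

open Matrix
open scoped ComplexOrder

/-- The permutation operator `T(π)` on `(ℂ^d)^⊗n`, sending the basis vector
`e_f` to `e_{f ∘ π⁻¹}`. -/
noncomputable def permOp (n d : ℕ) (π : Equiv.Perm (Fin n)) :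
    Matrix (Fin n → Fin d) (Fin n → Fin d) ℂ :=
  Matrix.of fun i j => if i = j ∘ ⇑π.symm then 1 else 0

/-- The swap operator exchanging tensor factors `i` and `j` of `(ℂ²)^⊗n`. -/
noncomputable def swapOp (n : ℕ) (i j : Fin n) :
    Matrix (Fin n → Fin 2) (Fin n → Fin 2) ℂ :=
  permOp n 2 (Equiv.swap i j)

/-! ### Auxiliary constructions -/

/-- The four basis vectors supporting our density matrix: `|000⟩, |100⟩, |010⟩, |001⟩`. -/
def wv : Fin 4 → (Fin 3 → Fin 2) :=
  ![fun _ => 0, fun i => if i = 0 then 1 else 0,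
    fun i => if i = 1 then 1 else 0, fun i => if i = 2 then 1 else 0]

/-- The isometry embedding `ℝ⁴` into the span of the four basis vectors. -/
def BB : Matrix (Fin 3 → Fin 2) (Fin 4) ℝ :=
  Matrix.of fun f k => if f = wv k then 1 else 0

/-- The 4×4 real coefficient matrix. -/
noncomputable def NN (x y z : ℝ) : Matrix (Fin 4) (Fin 4) ℝ :=
  !![(x+y+z)/3, 0, 0, 0;
     0, (6*z-3-(x+y+z))/18 + (3-(x+y+z))/6, (6*x-3-(x+y+z))/18, (6*y-3-(x+y+z))/18;
     0, (6*x-3-(x+y+z))/18, (6*y-3-(x+y+z))/18 + (3-(x+y+z))/6, (6*z-3-(x+y+z))/18;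
     0, (6*y-3-(x+y+z))/18, (6*z-3-(x+y+z))/18, (6*x-3-(x+y+z))/18 + (3-(x+y+z))/6]

/-- The real version of the permutation matrix. -/
def SRm (τ : Equiv.Perm (Fin 3)) : Matrix (Fin 3 → Fin 2) (Fin 3 → Fin 2) ℝ :=
  Matrix.of fun f g => if f = g ∘ ⇑τ then 1 else 0

lemma key_quad (t p q r u0 u1 u2 : ℝ) (ht : 0 ≤ t)
    (hsum : p + q + r = -(t/2)) (he : 0 ≤ p*q + q*r + r*p) :
    0 ≤ (p+t/2)*u0^2 + (q+t/2)*u1^2 + (r+t/2)*u2^2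
      + 2*(r*u0*u1) + 2*(q*u0*u2) + 2*(p*u1*u2) := by
  rcases eq_or_lt_of_le ht with h0 | h0
  · have hp : p = 0 := by nlinarith [sq_nonneg p, sq_nonneg q, sq_nonneg r, sq_nonneg (p+q+r)]
    have hq : q = 0 := by nlinarith [sq_nonneg p, sq_nonneg q, sq_nonneg r, sq_nonneg (p+q+r)]
    have hr : r = 0 := by nlinarith [sq_nonneg p, sq_nonneg q, sq_nonneg r, sq_nonneg (p+q+r)]
    simp [hp, hq, hr, ← h0]
  · have hrr : r = -(t/2) - p - q := by linarith
    subst hrr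
    have hnn : 0 ≤ ((p+t/2)*u0 + (-(t/2)-p-q)*u1 + q*u2)^2
        + ((-(t/2)-p-q)*u0 + (q+t/2)*u1 + p*u2)^2
        + (q*u0 + p*u1 + ((-(t/2)-p-q)+t/2)*u2)^2
        + (p*q + q*(-(t/2)-p-q) + (-(t/2)-p-q)*p)
          * ((u0-u1)^2 + (u1-u2)^2 + (u0-u2)^2) :=
      add_nonneg (add_nonneg (add_nonneg (sq_nonneg _) (sq_nonneg _)) (sq_nonneg _))
        (mul_nonneg he (by positivity))
    have hid : t * ((p+t/2)*u0^2 + (q+t/2)*u1^2 + ((-(t/2)-p-q)+t/2)*u2^2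
        + 2*((-(t/2)-p-q)*u0*u1) + 2*(q*u0*u2) + 2*(p*u1*u2)) =
        ((p+t/2)*u0 + (-(t/2)-p-q)*u1 + q*u2)^2
        + ((-(t/2)-p-q)*u0 + (q+t/2)*u1 + p*u2)^2
        + (q*u0 + p*u1 + ((-(t/2)-p-q)+t/2)*u2)^2
        + (p*q + q*(-(t/2)-p-q) + (-(t/2)-p-q)*p)
          * ((u0-u1)^2 + (u1-u2)^2 + (u0-u2)^2) := by ring
    have := (mul_nonneg_iff_of_pos_left h0).mp (by rw [hid]; exact hnn)
    linarith

lemma posSemidef_map_ofReal {n : Type*} [Fintype n] [DecidableEq n]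
    (R : Matrix n n ℝ) (hsym : Rᵀ = R)
    (h : ∀ v : n → ℝ, 0 ≤ v ⬝ᵥ R *ᵥ v) :
    (R.map fun r => (r : ℂ)).PosSemidef := by
  have hherm : (R.map fun r => (r : ℂ)).IsHermitian := by
    ext i j
    simp only [Matrix.conjTranspose_apply, Matrix.map_apply, Complex.star_def,
      Complex.conj_ofReal]
    have : R j i = R i j := by rw [show R j i = Rᵀ i j from rfl, hsym]
    rw [this]
  refine Matrix.posSemidef_iff_dotProduct_mulVec.mpr ⟨hherm, fun xv => ?_⟩
  set M := R.map fun r => (r : ℂ) with hM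
  set d := star xv ⬝ᵥ M *ᵥ xv with hd
  have hstar : star d = d :=
    calc star d = star (star xv ⬝ᵥ M *ᵥ xv) := by rw [hd]
      _ = star (star (star (M *ᵥ xv) ⬝ᵥ xv)) := by rw [star_dotProduct]
      _ = star (M *ᵥ xv) ⬝ᵥ xv := star_star _
      _ = (star xv ᵥ* Mᴴ) ⬝ᵥ xv := by rw [star_mulVec]
      _ = (star xv ᵥ* M) ⬝ᵥ xv := by rw [hherm.eq]
      _ = star xv ⬝ᵥ (M *ᵥ xv) := (Matrix.dotProduct_mulVec _ _ _).symm
      _ = d := hd.symm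
  have him : d.im = 0 := by
    have := congrArg Complex.im hstar
    simp only [Complex.star_def, Complex.conj_im] at this
    linarith
  have hre : d.re = (fun i => (xv i).re) ⬝ᵥ R *ᵥ (fun i => (xv i).re)
      + (fun i => (xv i).im) ⬝ᵥ R *ᵥ (fun i => (xv i).im) := by
    rw [hd, hM]
    simp only [dotProduct, Matrix.mulVec, Matrix.map_apply, Pi.star_apply]
    rw [Complex.re_sum, ← Finset.sum_add_distrib]
    refine Finset.sum_congr rfl fun i _ => ?_
    rw [Complex.mul_re]
    simp only [Complex.star_def, Complex.conj_re, Complex.conj_im]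
    rw [Complex.re_sum, Complex.im_sum]
    simp only [Complex.mul_re, Complex.mul_im, Complex.ofReal_re, Complex.ofReal_im,
      zero_mul, sub_zero, zero_add, Finset.mul_sum]
    rw [← Finset.sum_add_distrib, ← Finset.sum_sub_distrib]
    refine Finset.sum_congr rfl fun j _ => ?_
    ring
  rw [Complex.le_def]
  refine ⟨?_, by simp [him]⟩
  simp only [Complex.zero_re, hre]
  exact add_nonneg (h _) (h _)

lemma BB_orth : BBᵀ * BB = (1 : Matrix (Fin 4) (Fin 4) ℝ) := by
  ext k l
  simp only [Matrix.mul_apply, BB, Matrix.transpose_apply, Matrix.of_apply, ite_mul,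
    one_mul, zero_mul, Finset.sum_ite_eq', Finset.mem_univ, if_true]
  have hwv : (wv k = wv l) ↔ k = l := by
    constructor
    · revert k l; decide
    · rintro rfl; rfl
  by_cases hkl : k = l
  · simp [hkl, Matrix.one_apply]
  · rw [if_neg (fun hc => hkl (hwv.mp hc)), Matrix.one_apply_ne hkl]

lemma BB_conj (S : Matrix (Fin 3 → Fin 2) (Fin 3 → Fin 2) ℝ) (k l : Fin 4) :
    (BBᵀ * S * BB) k l = S (wv k) (wv l) := by
  simp only [Matrix.mul_apply, BB, Matrix.transpose_apply, Matrix.of_apply, ite_mul, mul_ite,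
    one_mul, mul_one, zero_mul, mul_zero, Finset.sum_ite_eq', Finset.sum_ite_eq,
    Finset.mem_univ, if_true]

lemma traceBNB (N : Matrix (Fin 4) (Fin 4) ℝ)
    (S : Matrix (Fin 3 → Fin 2) (Fin 3 → Fin 2) ℝ) :
    Matrix.trace (BB * N * BBᵀ * S) = Matrix.trace (N * (BBᵀ * S * BB)) := by
  rw [Matrix.mul_assoc (BB * N) BBᵀ S, Matrix.trace_mul_comm, ← Matrix.mul_assoc,
    Matrix.trace_mul_comm]

lemma map_mul_ofReal {m : Type*} [Fintype m] [DecidableEq m] (A B : Matrix m m ℝ) :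
    (A * B).map (fun r => (r : ℂ)) = A.map (fun r => (r : ℂ)) * B.map (fun r => (r : ℂ)) := by
  ext f g
  simp only [Matrix.mul_apply, Matrix.map_apply]
  push_cast
  rfl

lemma trace_map_ofReal {m : Type*} [Fintype m] (A : Matrix m m ℝ) :
    (A.map (fun r => (r : ℂ))).trace = ((A.trace : ℝ) : ℂ) := by
  simp only [Matrix.trace, Matrix.diag_apply, Matrix.map_apply]
  push_cast
  rfl

theorem lm_pt_sufficient (x y z : ℝ)
    (hLM : 0 ≤ x + y + z ∧ x + y + z ≤ 3)
    (hPT : (x ^ 2 + y ^ 2 + z ^ 2) - 2 * (x * y + x * z + y * z)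
      + 2 * (x + y + z) ≤ 3) :
    ∃ ρ : Matrix (Fin 3 → Fin 2) (Fin 3 → Fin 2) ℂ,
      ρ.PosSemidef ∧ ρ.trace = 1 ∧ (∀ i j, (ρ i j).im = 0) ∧ ρᵀ = ρ ∧
      Matrix.trace (ρ * swapOp 3 0 1) = (x : ℂ) ∧
      Matrix.trace (ρ * swapOp 3 0 2) = (y : ℂ) ∧
      Matrix.trace (ρ * swapOp 3 1 2) = (z : ℂ) := by
  obtain ⟨hLM1, hLM2⟩ := hLM
  have hNsym : (NN x y z)ᵀ = NN x y z := by
    ext i j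
    fin_cases i <;> fin_cases j <;> rfl
  have hRsym : (BB * NN x y z * BBᵀ)ᵀ = BB * NN x y z * BBᵀ := by
    rw [Matrix.transpose_mul, Matrix.transpose_mul, Matrix.transpose_transpose, hNsym,
      Matrix.mul_assoc]
  have hswap : ∀ i j : Fin 3, swapOp 3 i j = (SRm (Equiv.swap i j)).map (fun r => (r : ℂ)) := by
    intro i j
    ext f g
    simp [swapOp, permOp, SRm, Matrix.map_apply, Equiv.symm_swap,
      apply_ite (fun r : ℝ => (r : ℂ))]
    congr 1
  have htr : ∀ τ : Equiv.Perm (Fin 3),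
      Matrix.trace ((BB * NN x y z * BBᵀ).map (fun r => (r : ℂ))
        * (SRm τ).map (fun r => (r : ℂ)))
      = ((Matrix.trace (NN x y z * (BBᵀ * SRm τ * BB)) : ℝ) : ℂ) := by
    intro τ
    rw [← map_mul_ofReal, trace_map_ofReal, traceBNB]
  refine ⟨(BB * NN x y z * BBᵀ).map (fun r => (r : ℂ)), ?_, ?_, ?_, ?_, ?_, ?_, ?_⟩
  · -- positive semidefinite
    apply posSemidef_map_ofReal _ hRsym
    intro v
    rw [← Matrix.mulVec_mulVec, ← Matrix.mulVec_mulVec, Matrix.dotProduct_mulVec,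
      ← Matrix.mulVec_transpose]
    generalize (BBᵀ *ᵥ v) = u
    have ht : 0 ≤ (3 - (x+y+z))/3 := by linarith
    have hsum : (6*z-3-(x+y+z))/18 + (6*y-3-(x+y+z))/18 + (6*x-3-(x+y+z))/18
        = -(((3 - (x+y+z))/3)/2) := by ring
    have he : 0 ≤ ((6*z-3-(x+y+z))/18) * ((6*y-3-(x+y+z))/18)
        + ((6*y-3-(x+y+z))/18) * ((6*x-3-(x+y+z))/18)
        + ((6*x-3-(x+y+z))/18) * ((6*z-3-(x+y+z))/18) := by nlinarith [hPT]
    have hkey := key_quad ((3 - (x+y+z))/3) ((6*z-3-(x+y+z))/18) ((6*y-3-(x+y+z))/18)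
      ((6*x-3-(x+y+z))/18) (u 1) (u 2) (u 3) ht hsum he
    have ha : 0 ≤ (x+y+z)/3 * (u 0)^2 :=
      mul_nonneg (by linarith) (sq_nonneg _)
    simp only [dotProduct, Matrix.mulVec, NN, Fin.sum_univ_four]
    simp only [Matrix.cons_val', Matrix.cons_val_zero, Matrix.cons_val_one, Matrix.head_cons,
      Matrix.empty_val', Matrix.cons_val_fin_one, Matrix.head_fin_const, Matrix.of_apply,
      Matrix.cons_val_two, Matrix.cons_val_three, Matrix.vecTail, Matrix.vecHead,
      Function.comp_apply, Fin.succ_zero_eq_one, Fin.succ_one_eq_two, Matrix.tail_cons]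
    nlinarith [hkey, ha]
  · -- trace one
    rw [trace_map_ofReal]
    have : Matrix.trace (BB * NN x y z * BBᵀ) = 1 := by
      rw [← mul_one (BB * NN x y z * BBᵀ), traceBNB, Matrix.mul_one, BB_orth,
        Matrix.mul_one]
      simp only [Matrix.trace, Matrix.diag_apply, NN, Fin.sum_univ_four]
      simp only [Matrix.cons_val', Matrix.cons_val_zero, Matrix.cons_val_one, Matrix.head_cons,
        Matrix.empty_val', Matrix.cons_val_fin_one, Matrix.head_fin_const, Matrix.of_apply,
        Matrix.cons_val_two, Matrix.cons_val_three, Matrix.vecTail, Matrix.vecHead,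
        Function.comp_apply, Fin.succ_zero_eq_one, Fin.succ_one_eq_two, Matrix.tail_cons]
      ring
    rw [this]
    norm_num
  · -- real entries
    intro i j
    simp [Matrix.map_apply]
  · -- symmetric
    rw [← Matrix.transpose_map]
    rw [hRsym]
  · -- swap 0 1
    rw [hswap 0 1, htr]
    norm_cast
    have hG : BBᵀ * SRm (Equiv.swap 0 1) * BB
        = !![1,0,0,0; 0,0,1,0; 0,1,0,0; 0,0,0,1] := by
      ext k l
      rw [BB_conj]
      fin_cases k <;> fin_cases l <;>
        simp (config := { decide := true }) [SRm, Matrix.of_apply, Matrix.vecHead,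
          Matrix.vecTail, Function.comp_apply]
    rw [hG]
    simp only [Matrix.trace, Matrix.diag_apply, Matrix.mul_apply, NN, Fin.sum_univ_four]
    simp only [Matrix.cons_val', Matrix.cons_val_zero, Matrix.cons_val_one, Matrix.head_cons,
      Matrix.empty_val', Matrix.cons_val_fin_one, Matrix.head_fin_const, Matrix.of_apply,
      Matrix.cons_val_two, Matrix.cons_val_three, Matrix.vecTail, Matrix.vecHead,
      Function.comp_apply, Fin.succ_zero_eq_one, Fin.succ_one_eq_two, Matrix.tail_cons]
    ring
  · -- swap 0 2
    rw [hswap 0 2, htr]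
    norm_cast
    have hG : BBᵀ * SRm (Equiv.swap 0 2) * BB
        = !![1,0,0,0; 0,0,0,1; 0,0,1,0; 0,1,0,0] := by
      ext k l
      rw [BB_conj]
      fin_cases k <;> fin_cases l <;>
        simp (config := { decide := true }) [SRm, Matrix.of_apply, Matrix.vecHead,
          Matrix.vecTail, Function.comp_apply]
    rw [hG]
    simp only [Matrix.trace, Matrix.diag_apply, Matrix.mul_apply, NN, Fin.sum_univ_four]
    simp only [Matrix.cons_val', Matrix.cons_val_zero, Matrix.cons_val_one, Matrix.head_cons,
      Matrix.empty_val', Matrix.cons_val_fin_one, Matrix.head_fin_const, Matrix.of_apply,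
      Matrix.cons_val_two, Matrix.cons_val_three, Matrix.vecTail, Matrix.vecHead,
      Function.comp_apply, Fin.succ_zero_eq_one, Fin.succ_one_eq_two, Matrix.tail_cons]
    ring
  · -- swap 1 2
    rw [hswap 1 2, htr]
    norm_cast
    have hG : BBᵀ * SRm (Equiv.swap 1 2) * BB
        = !![1,0,0,0; 0,1,0,0; 0,0,0,1; 0,0,1,0] := by
      ext k l
      rw [BB_conj]
      fin_cases k <;> fin_cases l <;>
        simp (config := { decide := true }) [SRm, Matrix.of_apply, Matrix.vecHead,
          Matrix.vecTail, Function.comp_apply]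
    rw [hG]
    simp only [Matrix.trace, Matrix.diag_apply, Matrix.mul_apply, NN, Fin.sum_univ_four]
    simp only [Matrix.cons_val', Matrix.cons_val_zero, Matrix.cons_val_one, Matrix.head_cons,
      Matrix.empty_val', Matrix.cons_val_fin_one, Matrix.head_fin_const, Matrix.of_apply,
      Matrix.cons_val_two, Matrix.cons_val_three, Matrix.vecTail, Matrix.vecHead,
      Function.comp_apply, Fin.succ_zero_eq_one, Fin.succ_one_eq_two, Matrix.tail_cons]
    ring
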